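/- Let A be a type, and let B and X be types each equipped with a ternary operation t_B and t_X satisfying the Mal'cev identities (t(x,x,y) = y and t(x,y,y) = x). Let p : B → X satisfy p(t_B(a,b,c)) = t_X(p(a), p(b), p(c)) for all a,b,c ∈ B, let s : X → B satisfy p ∘ s = id, and let q : A → X be any function. Then the function r : A × B → {(a,b) ∈ A × B | q(a) = p(b)} defined by r(a,b) = (a, t_B(s(q(a)), s(p(b)), b)) is well-defined and is a retraction of the inclusion {(a,b) | q(a) = p(b)} ↪ A × B, i.e. r restricted to the fiber product is the identity. -/
import Mathlib

/-- If `p : B → X` is a map of herds with a section `s`, then for any `q : A → X` the map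
`r(a,b) = (a, t_B(s(q a), s(p b), b))` is a well-defined retraction of the inclusion of the
fiber product `A ×_X B` into `A × B`. -/
theorem stmt_3 {A B X : Type*} (tB : B → B → B → B) (tX : X → X → X → X)
    (hB1 : ∀ x y : B, tB x x y = y) (hB2 : ∀ x y : B, tB x y y = x)
    (hX1 : ∀ x y : X, tX x x y = y) (hX2 : ∀ x y : X, tX x y y = x)
    (p : B → X) (hp : ∀ a b c : B, p (tB a b c) = tX (p a) (p b) (p c))
    (s : X → B) (hs : ∀ x : X, p (s x) = x) (q : A → X) :
    (∀ (a : A) (b : B), q a = p (tB (s (q a)) (s (p b)) b)) ∧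
    (∀ (a : A) (b : B), q a = p b → tB (s (q a)) (s (p b)) b = b) := by
  constructor
  · intro a b
    rw [hp, hs, hs, hX2]
  · intro a b h
    rw [h, hB1]
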